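/- For every α > 0 and β > 0, the power series Σ_{k=0}^∞ z^k/Γ(αk+β) defining the Mittag–Leffler function E_{α,β} converges absolutely for every complex number z; that is, the series has infinite radius of convergence and E_{α,β} is an entire function. -/

import Mathlib

open Complex

open Filter Real Topology in
private lemma gamma_ratio_le (α : ℝ) (hα : 0 < α) {t : ℝ} (ht : 1 < t) :
    Real.Gamma t / Real.Gamma (t + α) ≤ Real.exp (-(α * Real.log (t - 1))) := by
  have ht0 : 0 < t := by linarith
  have ht1 : 0 < t - 1 := by linarith
  have hGt : 0 < Real.Gamma t := Real.Gamma_pos_of_pos ht0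
  have hGt1 : 0 < Real.Gamma (t - 1) := Real.Gamma_pos_of_pos ht1
  have hGta : 0 < Real.Gamma (t + α) := Real.Gamma_pos_of_pos (by linarith)
  have hslope := Real.convexOn_log_Gamma.slope_mono_adjacent
    (x := t - 1) (y := t) (z := t + α)
    (Set.mem_Ioi.mpr ht1) (Set.mem_Ioi.mpr (by linarith)) (by linarith) (by linarith)
  have hlogt : Real.log (Real.Gamma t) =
      Real.log (t - 1) + Real.log (Real.Gamma (t - 1)) := by
    have : Real.Gamma t = (t - 1) * Real.Gamma (t - 1) := by
      have := Real.Gamma_add_one ht1.ne'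
      simpa using this
    rw [this, Real.log_mul ht1.ne' hGt1.ne']
  simp only [Function.comp_apply] at hslope
  rw [show t - (t - 1) = 1 by ring, show t + α - t = α by ring, div_one] at hslope
  have key : α * Real.log (t - 1) ≤
      Real.log (Real.Gamma (t + α)) - Real.log (Real.Gamma t) := by
    have h1 : Real.log (t - 1) ≤
        (Real.log (Real.Gamma (t + α)) - Real.log (Real.Gamma t)) / α := by
      calc Real.log (t - 1) = Real.log (Real.Gamma t) - Real.log (Real.Gamma (t - 1)) := by
            rw [hlogt]; ring
        _ ≤ _ := hslope
    calc α * Real.log (t - 1) ≤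
        α * ((Real.log (Real.Gamma (t + α)) - Real.log (Real.Gamma t)) / α) := by
          exact mul_le_mul_of_nonneg_left h1 hα.le
      _ = _ := by field_simp
  calc Real.Gamma t / Real.Gamma (t + α)
      = Real.exp (Real.log (Real.Gamma t) - Real.log (Real.Gamma (t + α))) := by
        rw [Real.exp_sub, Real.exp_log hGt, Real.exp_log hGta]
    _ ≤ Real.exp (-(α * Real.log (t - 1))) := by
        apply Real.exp_le_exp.mpr; linarith

open Filter Real Topology in
private lemma gamma_ratio_tendsto (α β : ℝ) (hα : 0 < α) (hβ : 0 < β) :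
    Tendsto (fun n : ℕ => Real.Gamma (α * n + β) / Real.Gamma (α * n + β + α))
      atTop (𝓝 0) := by
  have harg : Tendsto (fun n : ℕ => α * n + β) atTop atTop :=
    tendsto_atTop_add_const_right _ β
      ((tendsto_natCast_atTop_atTop (R := ℝ)).const_mul_atTop hα)
  have hbig : Tendsto (fun n : ℕ => Real.exp (-(α * Real.log (α * n + β - 1))))
      atTop (𝓝 0) := by
    have harg' : Tendsto (fun n : ℕ => α * n + β - 1) atTop atTop :=
      (tendsto_atTop_add_const_right _ (-1) harg).congr (fun n => by ring)
    exact Real.tendsto_exp_atBot.comp (tendsto_neg_atTop_atBot.comp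
      ((Real.tendsto_log_atTop.comp harg').const_mul_atTop hα))
  apply tendsto_of_tendsto_of_tendsto_of_le_of_le' tendsto_const_nhds hbig
  · filter_upwards [harg.eventually_gt_atTop 1] with n hn
    positivity
  · filter_upwards [harg.eventually_gt_atTop 1] with n hn
    exact gamma_ratio_le α hα hn

open Filter FormalMultilinearSeries in
/-- The power series `Σ_{k=0}^∞ z^k / Γ(αk + β)` defining the Mittag–Leffler
function `E_{α,β}` converges absolutely for every `z ∈ ℂ`, and `E_{α,β}` is an
entire function. -/
theorem mittag_leffler_entire (α β : ℝ) (hα : 0 < α) (hβ : 0 < β) :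
    (∀ z : ℂ, Summable fun k : ℕ => ‖z ^ k / Complex.Gamma ((α : ℂ) * k + (β : ℂ))‖) ∧
      Differentiable ℂ fun z : ℂ => ∑' k : ℕ, z ^ k / Complex.Gamma ((α : ℂ) * k + (β : ℂ)) := by
  set c : ℕ → ℂ := fun k => (Complex.Gamma ((α : ℂ) * k + (β : ℂ)))⁻¹ with hc
  have hcast : ∀ k : ℕ, (α : ℂ) * k + (β : ℂ) = ((α * k + β : ℝ) : ℂ) := by
    intro k; push_cast; ring
  have hpos : ∀ k : ℕ, 0 < Real.Gamma (α * k + β) := fun k =>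
    Real.Gamma_pos_of_pos (by positivity)
  have hGamma : ∀ k : ℕ, Complex.Gamma ((α : ℂ) * k + (β : ℂ)) =
      ((Real.Gamma (α * k + β) : ℝ) : ℂ) := by
    intro k; rw [hcast k, Complex.Gamma_ofReal]
  have hnorm : ∀ k : ℕ, ‖c k‖ = (Real.Gamma (α * k + β))⁻¹ := by
    intro k
    rw [hc]
    simp only [norm_inv, hGamma k, Complex.norm_real, Real.norm_eq_abs,
      abs_of_pos (hpos k)]
  have hne : ∀ k : ℕ, c k ≠ 0 := by
    intro k
    rw [hc]
    simp only [ne_eq, inv_eq_zero, hGamma k, Complex.ofReal_eq_zero]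
    exact (hpos k).ne'
  have hradius : (ofScalars ℂ c).radius = ⊤ := by
    apply ofScalars_radius_eq_top_of_tendsto ℂ c (Eventually.of_forall hne)
    have : (fun n : ℕ => ‖c (n + 1)‖ / ‖c n‖) =
        fun n : ℕ => Real.Gamma (α * n + β) / Real.Gamma (α * n + β + α) := by
      funext n
      rw [hnorm, hnorm, inv_div_inv]
      congr 2
      push_cast; ring
    rw [show (fun n : ℕ => ‖c n.succ‖ / ‖c n‖) = fun n : ℕ => ‖c (n + 1)‖ / ‖c n‖ from rfl,
      this]
    exact gamma_ratio_tendsto α β hα hβ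
  have hsummable : ∀ z : ℂ,
      Summable fun k : ℕ => ‖z ^ k / Complex.Gamma ((α : ℂ) * k + (β : ℂ))‖ := by
    intro z
    have h1 : Summable fun n : ℕ => ‖ofScalars ℂ c n‖ * (‖z‖₊ : ℝ) ^ n :=
      (ofScalars ℂ c).summable_norm_mul_pow (by rw [hradius]; exact ENNReal.coe_lt_top)
    apply h1.congr
    intro n
    rw [ofScalars_norm, hnorm]
    rw [norm_div, norm_pow, hGamma n]
    simp only [coe_nnnorm, Complex.norm_real, Real.norm_eq_abs, abs_of_pos (hpos n)]
    ring
  refine ⟨hsummable, ?_⟩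
  have hfun : (fun z : ℂ => ∑' k : ℕ, z ^ k / Complex.Gamma ((α : ℂ) * k + (β : ℂ))) =
      (ofScalars ℂ c).sum := by
    funext z
    rw [FormalMultilinearSeries.sum]
    apply tsum_congr
    intro n
    rw [FormalMultilinearSeries.ofScalars_apply_eq]
    rw [smul_eq_mul, div_eq_mul_inv, mul_comm]
  rw [hfun]
  intro z
  have hball := (ofScalars ℂ c).hasFPowerSeriesOnBall
    (by rw [hradius]; exact ENNReal.zero_lt_top)
  have hz : z ∈ EMetric.ball (0 : ℂ) (ofScalars ℂ c).radius := by
    rw [hradius]; exact EMetric.mem_ball.mpr (edist_lt_top z 0)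
  exact (hball.analyticAt_of_mem (by rw [hradius]; exact ENNReal.coe_lt_top)).differentiableAt
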